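/- Let n ≥ 2 and 1 ≤ k ≤ n−1. Let λ₁ ≥ λ₂ ≥ … ≥ λ_n > 0, set κ_α = 1/λ_α and F^{αα} = σ_{k−1}(κ|α)·κ_α²/σ_k(κ)². Then for every symmetric n×n real matrix ξ: Σ_{α≥2} F^{αα}·ξ_{α1}²/λ₁ ≥ Σ_{α≥2} F^{11}·ξ_{1α}²/λ_α. -/

import Mathlib

open scoped Classical

noncomputable section

/-- The `j`-th elementary symmetric function of the family `κ` restricted to the
finite index set `s`; it is `1` for `j = 0`, and `0` for `j < 0` (or for `j`
larger than the cardinality of `s`). -/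
def sigmaE {ι : Type*} (s : Finset ι) (j : ℤ) (κ : ι → ℝ) : ℝ :=
  if 0 ≤ j then ∑ t ∈ s.powersetCard j.toNat, ∏ i ∈ t, κ i else 0

/-- `σ_j(κ)`, the `j`-th elementary symmetric polynomial evaluated at `κ`. -/
def sigmaV {ι : Type*} [Fintype ι] (j : ℤ) (κ : ι → ℝ) : ℝ :=
  sigmaE Finset.univ j κ

/-- `σ_j(κ|α)`: `σ_j` of `κ` with the `α`-th entry deleted. -/
def sigmaV1 {ι : Type*} [Fintype ι] [DecidableEq ι] (j : ℤ) (κ : ι → ℝ) (α : ι) : ℝ :=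
  sigmaE (Finset.univ.erase α) j κ

/-- `σ_j(κ|αβ)`: `σ_j` of `κ` with the `α`-th and `β`-th entries deleted. -/
def sigmaV2 {ι : Type*} [Fintype ι] [DecidableEq ι] (j : ℤ) (κ : ι → ℝ) (α β : ι) : ℝ :=
  sigmaE ((Finset.univ.erase α).erase β) j κ

/-- `σ_j(A)` for a real `n × n` matrix `A`: the `j`-th elementary symmetric function of
the eigenvalues of `A` when `A` is symmetric (= Hermitian over `ℝ`), junk value `0`
otherwise. -/
def sigmaMat {n : ℕ} (j : ℤ) (A : Matrix (Fin n) (Fin n) ℝ) : ℝ :=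
  if h : A.IsHermitian then sigmaV j h.eigenvalues else 0

/-- The Hessian quotient operator `F(A) = σ_n(A)/σ_{n-k}(A)`. -/
def Fquot {n : ℕ} (k : ℕ) (A : Matrix (Fin n) (Fin n) ℝ) : ℝ :=
  sigmaMat (n : ℤ) A / sigmaMat ((n : ℤ) - (k : ℤ)) A

lemma sigmaE_nonneg {ι : Type*} (s : Finset ι) (j : ℤ) (κ : ι → ℝ)
    (h : ∀ i ∈ s, 0 ≤ κ i) : 0 ≤ sigmaE s j κ := by
  unfold sigmaE
  split
  · refine Finset.sum_nonneg fun t ht => Finset.prod_nonneg fun i hi => ?_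
    exact h i ((Finset.mem_powersetCard.mp ht).1 hi)
  · exact le_refl 0

lemma sigmaE_erase {ι : Type*} [DecidableEq ι] (s : Finset ι) (i : ι) (hi : i ∈ s)
    (j : ℤ) (κ : ι → ℝ) :
    sigmaE s j κ = sigmaE (s.erase i) j κ + κ i * sigmaE (s.erase i) (j - 1) κ := by
  rcases lt_or_ge j 0 with hj | hj
  · simp [sigmaE, not_le.mpr hj, not_le.mpr (by omega : j - 1 < 0)]
    intro h; omega
  rcases eq_or_lt_of_le hj with hj0 | hj1
  · have : j = 0 := hj0.symm
    subst this
    simp [sigmaE]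
  · have h1 : (1:ℤ) ≤ j := hj1
    set m := (j - 1).toNat with hm
    have hjt : j.toNat = m + 1 := by omega
    simp only [sigmaE, if_pos hj, if_pos (by omega : (0:ℤ) ≤ j - 1), hjt, ← hm]
    conv_lhs => rw [← Finset.insert_erase hi]
    rw [Finset.powersetCard_succ_insert (Finset.notMem_erase i s)]
    rw [Finset.sum_union ?disj]
    case disj =>
      rw [Finset.disjoint_left]
      intro t ht ht'
      rcases Finset.mem_image.mp ht' with ⟨u, _, rfl⟩
      exact (Finset.mem_erase.mp ((Finset.mem_powersetCard.mp ht).1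
        (Finset.mem_insert_self i u))).1 rfl
    congr 1
    rw [Finset.sum_image ?inj]
    case inj =>
      intro u hu v hv huv
      have hiu : i ∉ u := fun h =>
        (Finset.mem_erase.mp ((Finset.mem_powersetCard.mp hu).1 h)).1 rfl
      have hiv : i ∉ v := fun h =>
        (Finset.mem_erase.mp ((Finset.mem_powersetCard.mp hv).1 h)).1 rfl
      have := congrArg (fun t => Finset.erase t i) huv
      simpa [Finset.erase_insert hiu, Finset.erase_insert hiv] using this
    rw [Finset.mul_sum]
    refine Finset.sum_congr rfl fun t ht => ?_
    have hit : i ∉ t := fun h =>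
      (Finset.mem_erase.mp ((Finset.mem_powersetCard.mp ht).1 h)).1 rfl
    rw [Finset.prod_insert hit]

/-- inequality (2.30), `J₁ ≥ J₂`: with `λ₁ ≥ ⋯ ≥ λ_n > 0`,
`κ_α = 1/λ_α`, `F^{αα} = σ_{k-1}(κ|α)κ_α²/σ_k(κ)²`, for every symmetric `ξ`:
`Σ_{α≥2} F^{αα} ξ_{α1}²/λ₁ ≥ Σ_{α≥2} F^{11} ξ_{1α}²/λ_α`. -/
theorem stmt_11 (n k : ℕ) (hn : 2 ≤ n) (hk1 : 1 ≤ k) (hk2 : k ≤ n - 1)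
    (lam : Fin n → ℝ) (hpos : ∀ α, 0 < lam α) (hord : ∀ α β : Fin n, α ≤ β → lam β ≤ lam α)
    (ξ : Matrix (Fin n) (Fin n) ℝ) (hξ : ξ.IsSymm) :
    let i0 : Fin n := ⟨0, by omega⟩
    let κ : Fin n → ℝ := fun α => (lam α)⁻¹
    let Fd : Fin n → ℝ := fun α => sigmaV1 ((k : ℤ) - 1) κ α * (κ α) ^ 2 / (sigmaV (k : ℤ) κ) ^ 2
    ∑ α ∈ Finset.univ.erase i0, Fd α * (ξ α i0) ^ 2 / lam i0
      ≥ ∑ α ∈ Finset.univ.erase i0, Fd i0 * (ξ i0 α) ^ 2 / lam α := by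
  intro i0 κ Fd
  have hκpos : ∀ α, 0 < κ α := fun α => inv_pos.mpr (hpos α)
  have hκnn : ∀ i ∈ (Finset.univ : Finset (Fin n)), 0 ≤ κ i := fun i _ => (hκpos i).le
  refine Finset.sum_le_sum fun α hα => ?_
  have hαi0 : α ≠ i0 := (Finset.mem_erase.mp hα).1
  have hi0mem : i0 ∈ Finset.univ.erase α :=
    Finset.mem_erase.mpr ⟨Ne.symm hαi0, Finset.mem_univ _⟩
  have hαmem : α ∈ Finset.univ.erase i0 := hα
  set T : Finset (Fin n) := (Finset.univ.erase i0).erase α with hT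
  set P : ℝ := sigmaE T ((k:ℤ) - 1) κ with hP
  set Q : ℝ := sigmaE T ((k:ℤ) - 1 - 1) κ with hQ
  set A : ℝ := sigmaV1 ((k:ℤ) - 1) κ α with hA
  set B : ℝ := sigmaV1 ((k:ℤ) - 1) κ i0 with hB
  have hAeq : A = P + κ i0 * Q := by
    rw [hA, sigmaV1, sigmaE_erase _ i0 hi0mem, Finset.erase_right_comm, ← hT, ← hP, ← hQ]
  have hBeq : B = P + κ α * Q := by
    rw [hB, sigmaV1, sigmaE_erase _ α hαmem, ← hT, ← hP, ← hQ]
  have hPnn : 0 ≤ P := sigmaE_nonneg _ _ _ (fun i _ => (hκpos i).le)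
  have hκord : κ i0 ≤ κ α := by
    have : lam α ≤ lam i0 := hord i0 α (by exact Fin.mk_le_mk.mpr (Nat.zero_le _))
    exact inv_anti₀ (hpos α) this
  have key : B * κ i0 ^ 2 * κ α ≤ A * κ α ^ 2 * κ i0 := by
    have h1 := (hκpos i0).le
    have h2 := (hκpos α).le
    rw [hAeq, hBeq]
    nlinarith [mul_nonneg (mul_nonneg hPnn h1) h2,
      mul_nonneg (mul_nonneg (mul_nonneg hPnn h1) h2) (sub_nonneg.mpr hκord)]
  have hsym : ξ α i0 = ξ i0 α := by
    have := hξ.apply i0 α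
    simpa using this
  have e : ∀ x l : ℝ, x / (sigmaV (k:ℤ) κ) ^ 2 * (ξ i0 α) ^ 2 / l
      = (x * l⁻¹) * ((ξ i0 α) ^ 2 * ((sigmaV (k:ℤ) κ) ^ 2)⁻¹) := by
    intro x l
    rw [div_eq_mul_inv, div_eq_mul_inv]
    ring
  have hlaminv : ∀ β : Fin n, (lam β)⁻¹ = κ β := fun β => rfl
  show Fd i0 * (ξ i0 α) ^ 2 / lam α ≤ Fd α * (ξ α i0) ^ 2 / lam i0
  rw [hsym]
  show B * κ i0 ^ 2 / (sigmaV (k:ℤ) κ) ^ 2 * (ξ i0 α) ^ 2 / lam α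
      ≤ A * κ α ^ 2 / (sigmaV (k:ℤ) κ) ^ 2 * (ξ i0 α) ^ 2 / lam i0
  rw [e, e, hlaminv, hlaminv]
  refine mul_le_mul_of_nonneg_right key ?_
  positivity
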